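/- For any matroid M of rank k on {1,...,n}, the sequence I_M = (I_1,...,I_n), where I_i is the lexicographically minimal base of M with respect to the shifted linear order i < i+1 < ... < n < 1 < ... < i−1, is a Grassmann necklace. -/

import Mathlib

/-- The position of `i` in the cyclically shifted linear order
`r <_r r+1 <_r ⋯ <_r n-1 <_r 0 <_r ⋯ <_r r-1` on `Fin n`. -/
def shiftVal (n : ℕ) (r i : Fin n) : ℕ := ((i : ℕ) + n - (r : ℕ)) % n

/-- A Grassmann necklace: a sequence `(I_0, …, I_{n-1})` of subsets of `Fin n` such that
(indices mod `n`) if `i ∈ I_i` then `I_{i+1} = (I_i \ {i}) ∪ {j}` for some `j`, and if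
`i ∉ I_i` then `I_{i+1} = I_i`. -/
def IsGrassmannNecklace {n : ℕ} [NeZero n] (I : Fin n → Finset (Fin n)) : Prop :=
  ∀ i : Fin n, (i ∈ I i → ∃ j : Fin n, I (i + 1) = insert j ((I i).erase i)) ∧
    (i ∉ I i → I (i + 1) = I i)

/-- `B` is the lexicographically minimal member of `M` with respect to the shifted linear
order `<_r`: for any other `C ∈ M`, the `<_r`-minimal element of the symmetric difference
`B Δ C` lies in `B`. -/
def IsLexMin (n : ℕ) (r : Fin n) (M : Finset (Finset (Fin n))) (B : Finset (Fin n)) : Prop :=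
  B ∈ M ∧ ∀ C ∈ M, C ≠ B → ∃ x ∈ B \ C, ∀ y ∈ C \ B, shiftVal n r x < shiftVal n r y

section Aux

variable {n : ℕ} [NeZero n]

lemma shiftVal_formula (r i : Fin n) :
    shiftVal n r i = if (r : ℕ) ≤ (i : ℕ) then (i : ℕ) - r else (i : ℕ) + n - r := by
  have hi := i.isLt; have hr := r.isLt
  unfold shiftVal
  split_ifs with h
  · have h2 : (i : ℕ) + n - r = n + ((i : ℕ) - r) := by omega
    rw [h2, Nat.add_mod_left, Nat.mod_eq_of_lt (by omega)]
  · rw [Nat.mod_eq_of_lt (by omega)]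

lemma val_add_one (r : Fin n) : ((r + 1 : Fin n) : ℕ) = if (r : ℕ) + 1 = n then 0 else (r : ℕ) + 1 := by
  have hr := r.isLt
  have h : ((r + 1 : Fin n) : ℕ) = ((r : ℕ) + (1 : Fin n).val) % n := rfl
  rw [h, Fin.val_one']
  rcases Nat.lt_or_ge 1 n with h1 | h1
  · rw [Nat.mod_eq_of_lt h1]
    split_ifs with h2
    · rw [h2, Nat.mod_self]
    · exact Nat.mod_eq_of_lt (by omega)
  · have hn : n = 1 := by omega
    subst hn
    have h0 : (r : ℕ) = 0 := by omega
    rw [h0]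
    norm_num

lemma shiftVal_succ {r i : Fin n} (h : i ≠ r) :
    shiftVal n (r + 1) i + 1 = shiftVal n r i := by
  have hv : (i : ℕ) ≠ (r : ℕ) := fun hh => h (Fin.ext hh)
  have hi := i.isLt; have hr := r.isLt
  rw [shiftVal_formula, shiftVal_formula, val_add_one]
  split_ifs <;> omega

lemma shiftVal_succ_self (r : Fin n) : shiftVal n (r + 1) r = n - 1 := by
  have hr := r.isLt
  rw [shiftVal_formula, val_add_one]
  split_ifs <;> omega

lemma shiftVal_lt (r i : Fin n) : shiftVal n r i < n :=
  Nat.mod_lt _ (Nat.pos_of_ne_zero (NeZero.ne n))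

lemma shiftVal_self (r : Fin n) : shiftVal n r r = 0 := by
  rw [shiftVal_formula]; simp

/-- Key consequence of lex-minimality: the initial segment of a lex-minimal base spans
every element `u ∉ C` that is not larger than its own initial segment. -/
lemma lexmin_spans {M : Finset (Finset (Fin n))} {s : Fin n}
    {C : Finset (Fin n)} (hC : IsLexMin n s M C) {M' : Matroid (Fin n)}
    (hbase : ∀ S : Set (Fin n), M'.IsBase S ↔ ∃ b ∈ M, ↑b = S) {u : Fin n} (hu : u ∉ C)
    (hind : M'.Indep (insert u {v : Fin n | v ∈ C ∧ shiftVal n s v < shiftVal n s u})) :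
    False := by
  have hCb : M'.IsBase ↑C := (hbase _).2 ⟨C, hC.1, rfl⟩
  obtain ⟨E, hE, hSE, hEs⟩ := hind.exists_isBase_subset_union_isBase hCb
  obtain ⟨e, heM, rfl⟩ := (hbase E).1 hE
  have hue : u ∈ e := hSE (Set.mem_insert _ _)
  have hne : e ≠ C := by rintro rfl; exact hu hue
  obtain ⟨x, hx, hlt⟩ := hC.2 e heM hne
  rw [Finset.mem_sdiff] at hx
  have hux : shiftVal n s x < shiftVal n s u :=
    hlt u (Finset.mem_sdiff.2 ⟨hue, hu⟩)
  have : (x : Fin n) ∈ (↑e : Set (Fin n)) := hSE (Set.mem_insert_of_mem _ ⟨hx.1, hux⟩)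
  exact hx.2 this

lemma erase_subset_next {k : ℕ} {M : Finset (Finset (Fin n))}
    (hcard : ∀ B ∈ M, B.card = k) {r : Fin n} {B B'' : Finset (Fin n)}
    (hB : IsLexMin n r M B) (hB'' : IsLexMin n (r + 1) M B'')
    (hrB : r ∈ B) (hrB'' : r ∉ B'') {M' : Matroid (Fin n)} (hE : M'.E = Set.univ)
    (hbase : ∀ S : Set (Fin n), M'.IsBase S ↔ ∃ b ∈ M, ↑b = S) :
    B.erase r ⊆ B'' := by
  intro β hβ'
  by_contra hβB''
  rw [Finset.mem_erase] at hβ'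
  obtain ⟨hβr, hβB⟩ := hβ'
  set P : Set (Fin n) := {v | shiftVal n (r + 1) v < shiftVal n (r + 1) β} with hP
  have hβlt : shiftVal n (r + 1) β < n := shiftVal_lt _ _
  have hrP : r ∉ P := by
    simp only [hP, Set.mem_setOf_eq, shiftVal_succ_self]; omega
  have hβP : β ∉ P := by
    intro h
    simp only [hP, Set.mem_setOf_eq] at h
    omega
  set Pr : Set (Fin n) := insert r P with hPr
  set X : Set (Fin n) := insert β Pr with hX
  set I₁ : Set (Fin n) := ↑B'' ∩ P with hI₁
  set I₂ : Set (Fin n) := insert r (↑B ∩ P) with hI₂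
  have hBb : M'.IsBase ↑B := (hbase _).2 ⟨B, hB.1, rfl⟩
  have hB''b : M'.IsBase ↑B'' := (hbase _).2 ⟨B'', hB''.1, rfl⟩
  have hI₁i : M'.Indep I₁ := hB''b.indep.subset Set.inter_subset_left
  have hI₂B : I₂ ⊆ ↑B := by
    intro v hv
    rcases Set.mem_insert_iff.1 hv with rfl | hv
    · exact hrB
    · exact hv.1
  have hI₂i : M'.Indep I₂ := hBb.indep.subset hI₂B
  have hJi : M'.Indep (insert β I₂) := hBb.indep.subset (Set.insert_subset hβB hI₂B)
  have hsucc_β : shiftVal n (r + 1) β + 1 = shiftVal n r β := shiftVal_succ hβr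
  -- spanning facts
  have ha : ∀ u : Fin n, u ∉ B'' → shiftVal n (r + 1) u ≤ shiftVal n (r + 1) β →
      ¬ M'.Indep (insert u I₁) := by
    intro u hu hle hind
    refine lexmin_spans hB'' hbase hu (hind.subset (Set.insert_subset_insert ?_))
    intro v hv
    exact ⟨hv.1, lt_of_lt_of_le hv.2 hle⟩
  have hb : ∀ u : Fin n, u ∉ B → shiftVal n r u ≤ shiftVal n r β →
      ¬ M'.Indep (insert u I₂) := by
    intro u hu hle hind
    refine lexmin_spans hB hbase hu (hind.subset (Set.insert_subset_insert ?_))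
    intro v hv
    by_cases hvr : v = r
    · exact hvr ▸ Set.mem_insert _ _
    · refine Set.mem_insert_of_mem _ ⟨hv.1, ?_⟩
      have h1 : shiftVal n (r + 1) v + 1 = shiftVal n r v := shiftVal_succ hvr
      have h2 := lt_of_lt_of_le hv.2 hle
      simp only [hP, Set.mem_setOf_eq]
      omega
  have hI₂Pr : I₂ ⊆ Pr := Set.insert_subset_insert Set.inter_subset_right
  have hle_of_Pr : ∀ u ∈ Pr, shiftVal n r u ≤ shiftVal n r β := by
    intro u hu
    rcases Set.mem_insert_iff.1 hu with rfl | hu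
    · rw [shiftVal_self]; omega
    · have hur : u ≠ r := fun h => hrP (h ▸ hu)
      have h1 : shiftVal n (r + 1) u + 1 = shiftVal n r u := shiftVal_succ hur
      have h2 : u ∈ {v | shiftVal n (r + 1) v < shiftVal n (r + 1) β} := hu
      simp only [Set.mem_setOf_eq] at h2
      omega
  have hI₂basis : M'.IsBasis I₂ Pr := by
    refine hI₂i.isBasis_of_forall_insert hI₂Pr ?_
    intro e he
    rw [Matroid.dep_iff]
    refine ⟨?_, by rw [hE]; exact Set.subset_univ _⟩
    refine hb e ?_ (hle_of_Pr e he.1)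
    intro heB
    apply he.2
    rcases Set.mem_insert_iff.1 he.1 with rfl | heP
    · exact Set.mem_insert _ _
    · exact Set.mem_insert_of_mem _ ⟨heB, heP⟩
  have hI₁Pr : I₁ ⊆ Pr := Set.inter_subset_right.trans (Set.subset_insert _ _)
  obtain ⟨K₂, hK₂, hI₁K₂⟩ := hI₁i.subset_isBasis_of_subset hI₁Pr
    (by rw [hE]; exact Set.subset_univ _)
  have e5 : I₁.encard ≤ I₂.encard := by
    rw [← hK₂.encard_eq_encard hI₂basis]
    exact Set.encard_mono hI₁K₂
  have hJX : insert β I₂ ⊆ X := Set.insert_subset_insert hI₂Pr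
  obtain ⟨K, hK, hJK⟩ := hJi.subset_isBasis_of_subset hJX (by rw [hE]; exact Set.subset_univ _)
  have hI₁X : I₁ ⊆ X := hI₁Pr.trans (Set.subset_insert _ _)
  obtain ⟨K₁, hK₁, hI₁K₁⟩ := hI₁i.subset_isBasis_of_subset hI₁X
    (by rw [hE]; exact Set.subset_univ _)
  have hK₁sub : K₁ ⊆ insert r I₁ := by
    intro u hu
    by_contra hnu
    rw [Set.mem_insert_iff] at hnu
    push_neg at hnu
    obtain ⟨hur, huI₁⟩ := hnu
    have huX := hK₁.subset hu
    have huind : M'.Indep (insert u I₁) := hK₁.indep.subset (Set.insert_subset hu hI₁K₁)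
    rcases Set.mem_insert_iff.1 huX with rfl | huPr
    · exact ha u hβB'' le_rfl huind
    · rcases Set.mem_insert_iff.1 huPr with rfl | huP
      · exact hur rfl
      · have huB'' : u ∉ B'' := fun h => huI₁ ⟨h, huP⟩
        have : shiftVal n (r + 1) u < shiftVal n (r + 1) β := huP
        exact ha u huB'' this.le huind
  have hβI₂ : β ∉ I₂ := by
    intro h
    rcases Set.mem_insert_iff.1 h with h | h
    · exact hβr h
    · exact hβP h.2
  have hJcard : (insert β I₂).encard = I₂.encard + 1 := Set.encard_insert_of_notMem hβI₂
  have hch : I₂.encard + 1 ≤ I₁.encard + 1 := by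
    calc I₂.encard + 1 = (insert β I₂).encard := hJcard.symm
      _ ≤ K.encard := Set.encard_mono hJK
      _ = K₁.encard := hK.encard_eq_encard hK₁
      _ ≤ (insert r I₁).encard := Set.encard_mono hK₁sub
      _ ≤ I₁.encard + 1 := Set.encard_insert_le _ _
  have hIeq : I₁.encard = I₂.encard := by
    refine le_antisymm e5 ?_
    exact (ENat.add_le_add_iff_right (by simp)).1 hch
  have hK₂I₂ : K₂.encard = I₂.encard := hK₂.encard_eq_encard hI₂basis
  have hI₁eqK₂ : I₁ = K₂ :=
    (Set.toFinite I₁).eq_of_subset_of_encard_le hI₁K₂ (by rw [hK₂I₂, ← hIeq])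
  have hI₁basis : M'.IsBasis I₁ Pr := by rw [hI₁eqK₂]; exact hK₂
  have hdep : ¬ M'.Indep (insert r I₁) := by
    intro h
    exact hrB'' (hI₁basis.mem_of_insert_indep (Set.mem_insert _ _) h).1
  have hrK₁ : r ∉ K₁ := fun h => hdep (hK₁.indep.subset (Set.insert_subset h hI₁K₁))
  have hK₁I₁ : K₁ = I₁ := by
    refine Set.Subset.antisymm ?_ hI₁K₁
    intro u hu
    rcases Set.mem_insert_iff.1 (hK₁sub hu) with rfl | h
    · exact absurd hu hrK₁
    · exact h
  have hfinal : I₂.encard + 1 ≤ I₂.encard := by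
    calc I₂.encard + 1 = (insert β I₂).encard := hJcard.symm
      _ ≤ K.encard := Set.encard_mono hJK
      _ = K₁.encard := hK.encard_eq_encard hK₁
      _ = I₁.encard := by rw [hK₁I₁]
      _ = I₂.encard := hIeq
  have hI₂fin : I₂.encard ≠ ⊤ := (Set.toFinite I₂).encard_lt_top.ne
  obtain ⟨m, hm⟩ := WithTop.ne_top_iff_exists.1 hI₂fin
  rw [← hm] at hfinal
  have : (m : ℕ∞) + 1 ≤ (m : ℕ∞) := hfinal
  have hmm : m + 1 ≤ m := by exact_mod_cast this
  omega

end Aux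

/-- For a matroid `M` of rank `k` on `Fin n`, the sequence whose `r`-th term is the
lexicographically minimal base of `M` with respect to the shifted order `<_r` is a
Grassmann necklace. -/
theorem matroid_lexmin_grassmann_necklace (n k : ℕ) [NeZero n]
    (M : Finset (Finset (Fin n))) (hne : M.Nonempty)
    (hcard : ∀ B ∈ M, B.card = k)
    (hex : ∀ I ∈ M, ∀ J ∈ M, ∀ i ∈ I, ∃ j ∈ J, insert j (I.erase i) ∈ M)
    (I : Fin n → Finset (Fin n)) (hmin : ∀ r : Fin n, IsLexMin n r M (I r)) :
    IsGrassmannNecklace I := by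
  classical
  -- Build the Mathlib matroid
  set Base : Set (Fin n) → Prop := fun S => ∃ b ∈ M, ↑b = S with hBaseDef
  have exch : Matroid.ExchangeProperty Base := by
    rintro X Y ⟨x, hxM, rfl⟩ ⟨y, hyM, rfl⟩ a ha
    rw [Set.mem_diff] at ha
    have hax : a ∈ x := ha.1
    have hay : a ∉ y := fun h => ha.2 h
    obtain ⟨j, hjy, hjM⟩ := hex x hxM y hyM a hax
    have hjx : j ∉ x := by
      intro hjx
      have hja : j ≠ a := fun h => hay (h ▸ hjy)
      have heq : insert j (x.erase a) = x.erase a :=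
        Finset.insert_eq_self.2 (Finset.mem_erase.2 ⟨hja, hjx⟩)
      have hc1 := hcard _ hjM
      rw [heq, Finset.card_erase_of_mem hax] at hc1
      have hc2 := hcard _ hxM
      have hpos : 0 < x.card := Finset.card_pos.2 ⟨a, hax⟩
      omega
    refine ⟨j, Set.mem_diff_of_mem hjy hjx, insert j (x.erase a), hjM, ?_⟩
    simp [Finset.coe_insert, Finset.coe_erase]
  obtain ⟨B₀, hB₀⟩ := hne
  set M' : Matroid (Fin n) :=
    Matroid.ofIsBaseOfFinite Set.finite_univ Base ⟨↑B₀, B₀, hB₀, rfl⟩ exch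
      (fun _ _ => Set.subset_univ _) with hM'
  have hE : M'.E = Set.univ := rfl
  have hbase : ∀ S : Set (Fin n), M'.IsBase S ↔ ∃ b ∈ M, ↑b = S := fun S => Iff.rfl
  intro r
  constructor
  · intro hr
    by_cases hr'' : r ∈ I (r + 1)
    · by_cases heq : I (r + 1) = I r
      · exact ⟨r, by rw [heq, Finset.insert_erase hr]⟩
      · exfalso
        obtain ⟨x, hx, hltx⟩ := (hmin r).2 (I (r + 1)) (hmin (r + 1)).1 heq
        obtain ⟨y, hy, hlty⟩ := (hmin (r + 1)).2 (I r) (hmin r).1 (fun h => heq h.symm)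
        rw [Finset.mem_sdiff] at hx hy
        have hxr : x ≠ r := fun h => hx.2 (h ▸ hr'')
        have hyr : y ≠ r := fun h => hy.2 (h ▸ hr)
        have h1 := hltx y (Finset.mem_sdiff.2 hy)
        have h2 := hlty x (Finset.mem_sdiff.2 hx)
        have h3 := shiftVal_succ hxr
        have h4 := shiftVal_succ hyr
        omega
    · have key : (I r).erase r ⊆ I (r + 1) :=
        erase_subset_next hcard (hmin r) (hmin (r + 1)) hr hr'' hE hbase
      have hc'' := hcard _ (hmin (r + 1)).1
      have hcB := hcard _ (hmin r).1
      have hkpos : 0 < k := hcB ▸ Finset.card_pos.2 ⟨r, hr⟩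
      have h1 : ((I r).erase r).card = k - 1 := by
        rw [Finset.card_erase_of_mem hr, hcB]
      have h2 : (I (r + 1) \ (I r).erase r).card = 1 := by
        rw [Finset.card_sdiff_of_subset key, hc'', h1]; omega
      obtain ⟨j, hj⟩ := Finset.card_eq_one.1 h2
      exact ⟨j, by rw [Finset.insert_eq, ← hj, Finset.sdiff_union_of_subset key]⟩
  · intro hr
    by_contra hne'
    obtain ⟨x, hx, hltx⟩ := (hmin r).2 (I (r + 1)) (hmin (r + 1)).1 hne'
    obtain ⟨y, hy, hlty⟩ := (hmin (r + 1)).2 (I r) (hmin r).1 (fun h => hne' h.symm)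
    rw [Finset.mem_sdiff] at hx hy
    have hxr : x ≠ r := fun h => hr (h ▸ hx.1)
    have h1 := hltx y (Finset.mem_sdiff.2 hy)
    have h2 := hlty x (Finset.mem_sdiff.2 hx)
    have h3 := shiftVal_succ hxr
    by_cases hyr : y = r
    · rw [hyr, shiftVal_succ_self] at h2
      have h5 := shiftVal_lt (r + 1) x
      omega
    · have h4 := shiftVal_succ hyr
      omega
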